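/- Let B be a real p×p matrix such that P B Pᵀ is strictly lower triangular for some permutation matrix P (so I − B is invertible), let D be a diagonal p×p matrix with strictly positive diagonal entries, set Σ = (I − B)⁻¹ D (I − B)⁻ᵀ, and let L be a lower triangular matrix with strictly positive diagonal entries satisfying L Lᵀ = Σ. Fix an index r and a nonzero real δ, and set ξ = L⁻¹ (I − B)⁻¹ (δ • e_r). Then ξ has exactly one nonzero coordinate if and only if both of the following hold: (i) B_{rk} = 0 for every index k > r, and (ii) ((I − B)⁻¹)_{kr} = 0 for every index k < r. -/
import Mathlib

open Matrix

/-- The inverse of a lower triangular matrix is lower triangular. -/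
lemma aux_inv_lowerTriangular {p : ℕ} (M : Matrix (Fin p) (Fin p) ℝ)
    (htri : ∀ i j : Fin p, i < j → M i j = 0) (hdet : IsUnit M.det) :
    ∀ i j : Fin p, i < j → M⁻¹ i j = 0 := by
  have : Invertible M := M.invertibleOfIsUnitDet hdet
  have hbt : M.BlockTriangular OrderDual.toDual := fun i j h => htri i j h
  exact fun i j h => blockTriangular_inv_of_blockTriangular hbt h

/-- Diagonal entries of a product of lower triangular matrices multiplying to 1. -/
lemma aux_tri_mul_diag {p : ℕ} (M N : Matrix (Fin p) (Fin p) ℝ)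
    (hM : ∀ i j : Fin p, i < j → M i j = 0) (hN : ∀ i j : Fin p, i < j → N i j = 0)
    (hMN : M * N = 1) (i : Fin p) : M i i * N i i = 1 := by
  have h : (M * N) i i = 1 := by rw [hMN]; exact Matrix.one_apply_eq i
  rw [Matrix.mul_apply] at h
  rw [← h]
  symm
  refine Finset.sum_eq_single i (fun k _ hk => ?_) (fun h => absurd (Finset.mem_univ i) h)
  rcases lt_or_gt_of_ne hk with h' | h'
  · rw [hN k i h', mul_zero]
  · rw [hM i k h', zero_mul]

theorem sufficient_permutation_characterization
    {p : ℕ} (B D L : Matrix (Fin p) (Fin p) ℝ)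
    (σ : Equiv.Perm (Fin p))
    (hB : ∀ i j : Fin p, i ≤ j → B (σ i) (σ j) = 0)
    (hDdiag : ∀ i j : Fin p, i ≠ j → D i j = 0)
    (hDpos : ∀ i : Fin p, 0 < D i i)
    (hLtri : ∀ i j : Fin p, i < j → L i j = 0)
    (hLdiag : ∀ i : Fin p, 0 < L i i)
    (hLL : L * Lᵀ = (1 - B)⁻¹ * D * ((1 - B)⁻¹)ᵀ)
    (r : Fin p) (δ : ℝ) (hδ : δ ≠ 0)
    (ξ : Fin p → ℝ)
    (hξ : ξ = (L⁻¹ * (1 - B)⁻¹).mulVec (δ • (Pi.single r 1 : Fin p → ℝ))) :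
    (∃! i : Fin p, ξ i ≠ 0) ↔
      ((∀ k : Fin p, r < k → B r k = 0) ∧
        (∀ k : Fin p, k < r → ((1 - B)⁻¹) k r = 0)) := by
  classical
  set A := (1 - B)⁻¹ with hAdef
  -- diagonal of B is zero
  have hBdiag : ∀ k : Fin p, B k k = 0 := by
    intro k
    have := hB (σ.symm k) (σ.symm k) le_rfl
    simpa using this
  -- `1 - B` is lower triangular in the σ-coordinates
  have hsub : ∀ i j : Fin p, i < j → (1 - B) (σ i) (σ j) = 0 := by
    intro i j h
    have h1 : (1 : Matrix (Fin p) (Fin p) ℝ) (σ i) (σ j) = 0 :=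
      Matrix.one_apply_ne (σ.injective.ne h.ne)
    simp [Matrix.sub_apply, h1, hB i j h.le]
  have hdet1 : (1 - B).det = 1 := by
    have h1 : ((1 - B).submatrix σ σ).det = ∏ i, ((1 - B).submatrix σ σ) i i :=
      Matrix.det_of_lowerTriangular _ (fun i j h => hsub i j (OrderDual.toDual_lt_toDual.mp h))
    rw [Matrix.det_submatrix_equiv_self] at h1
    rw [h1]
    refine Finset.prod_eq_one (fun i _ => ?_)
    simp [Matrix.sub_apply, hBdiag (σ i)]
  have hdetU : IsUnit (1 - B).det := by rw [hdet1]; exact isUnit_one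
  have hInv : (1 - B) * A = 1 := Matrix.mul_nonsing_inv _ hdetU
  have hInv' : A * (1 - B) = 1 := Matrix.nonsing_inv_mul _ hdetU
  -- `A` is lower triangular with unit diagonal in the σ-coordinates
  set C := (1 - B).submatrix σ σ with hCdef
  have hCtri : ∀ i j : Fin p, i < j → C i j = 0 := fun i j h => hsub i j h
  have hCdet : IsUnit C.det := by
    rw [hCdef, Matrix.det_submatrix_equiv_self]; exact hdetU
  have hCinv : C⁻¹ = A.submatrix σ σ := by
    refine Matrix.inv_eq_right_inv ?_
    rw [hCdef, Matrix.submatrix_mul_equiv, hInv]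
    simp
  have hAtri : ∀ i j : Fin p, i < j → A (σ i) (σ j) = 0 := by
    intro i j h
    have := aux_inv_lowerTriangular C hCtri hCdet i j h
    rw [hCinv] at this
    simpa using this
  have hAdiag : ∀ k : Fin p, A k k = 1 := by
    intro k
    have hmul : C * C⁻¹ = 1 := Matrix.mul_nonsing_inv _ hCdet
    have h2 := aux_tri_mul_diag C C⁻¹ hCtri
      (fun i j h => by rw [hCinv]; exact by simpa using hAtri i j h)
      hmul (σ.symm k)
    rw [hCinv] at h2
    have hC1 : C (σ.symm k) (σ.symm k) = 1 := by
      simp [hCdef, Matrix.sub_apply, hBdiag k]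
    rw [hC1, one_mul] at h2
    simpa using h2
  -- L facts
  have hLdet : IsUnit L.det := by
    have h1 : L.det = ∏ i, L i i :=
      Matrix.det_of_lowerTriangular _ (fun i j h => hLtri i j (OrderDual.toDual_lt_toDual.mp h))
    rw [h1]
    exact (Finset.prod_pos (fun i _ => hLdiag i)).ne'.isUnit
  have hLinvtri : ∀ i j : Fin p, i < j → L⁻¹ i j = 0 :=
    aux_inv_lowerTriangular L hLtri hLdet
  have hLLinv : L * L⁻¹ = 1 := Matrix.mul_nonsing_inv _ hLdet
  have hLinvL : L⁻¹ * L = 1 := Matrix.nonsing_inv_mul _ hLdet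
  have hLinvdiag : ∀ i : Fin p, L i i * L⁻¹ i i = 1 :=
    aux_tri_mul_diag L L⁻¹ hLtri hLinvtri hLLinv
  set M := L⁻¹ * A with hMdef
  have hLM : L * M = A := by
    rw [hMdef, ← mul_assoc, hLLinv, one_mul]
  -- key identity : D * Mᵀ = (1 - B) * L
  have hMright : M * ((1 - B) * L) = 1 := by
    rw [hMdef]
    calc L⁻¹ * A * ((1 - B) * L) = L⁻¹ * (A * (1 - B)) * L := by
          rw [mul_assoc, mul_assoc, mul_assoc]
      _ = 1 := by rw [hInv', mul_one, hLinvL]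
  have hMD : M * (D * Mᵀ) = 1 := by
    have hLt : (L⁻¹)ᵀ = (Lᵀ)⁻¹ := Matrix.transpose_nonsing_inv L
    have hLtdet : IsUnit (Lᵀ).det := by rwa [Matrix.det_transpose]
    calc M * (D * Mᵀ) = L⁻¹ * (A * D * Aᵀ) * (L⁻¹)ᵀ := by
          rw [hMdef, Matrix.transpose_mul]
          noncomm_ring
      _ = L⁻¹ * (L * Lᵀ) * (Lᵀ)⁻¹ := by rw [← hLL, hLt]
      _ = (L⁻¹ * L) * (Lᵀ * (Lᵀ)⁻¹) := by noncomm_ring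
      _ = 1 := by rw [hLinvL, Matrix.mul_nonsing_inv _ hLtdet, one_mul]
  have hDMt : D * Mᵀ = (1 - B) * L := by
    have hleft : ((1 - B) * L) * M = 1 := mul_eq_one_comm.mp hMright
    calc D * Mᵀ = (((1 - B) * L) * M) * (D * Mᵀ) := by rw [hleft, one_mul]
      _ = ((1 - B) * L) * (M * (D * Mᵀ)) := by rw [mul_assoc]
      _ = (1 - B) * L := by rw [hMD, mul_one]
  -- entrywise version of the key identity
  have key : ∀ j : Fin p, D r r * M j r = L r j - ∑ m, B r m * L m j := by
    intro j
    have h : (D * Mᵀ) r j = ((1 - B) * L) r j := by rw [hDMt]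
    rw [Matrix.mul_apply, Matrix.mul_apply] at h
    have hl : ∑ k, D r k * Mᵀ k j = D r r * M j r := by
      rw [Finset.sum_eq_single r (fun k _ hk => by rw [hDdiag r k (Ne.symm hk), zero_mul])
        (fun hc => absurd (Finset.mem_univ r) hc)]
      rfl
    have hr : ∑ m, (1 - B) r m * L m j = L r j - ∑ m, B r m * L m j := by
      have h1 : ∑ m, (1 : Matrix (Fin p) (Fin p) ℝ) r m * L m j = L r j := by
        rw [← Matrix.mul_apply, one_mul]
      calc ∑ m, (1 - B) r m * L m j
          = ∑ m, ((1 : Matrix (Fin p) (Fin p) ℝ) r m * L m j - B r m * L m j) := by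
            refine Finset.sum_congr rfl (fun m _ => ?_)
            rw [Matrix.sub_apply, sub_mul]
        _ = L r j - ∑ m, B r m * L m j := by rw [Finset.sum_sub_distrib, h1]
    rw [hl, hr] at h
    exact h
  -- ξ in terms of M
  have hxi : ∀ i : Fin p, ξ i = δ * M i r := by
    intro i
    rw [hξ]
    rw [Matrix.mulVec_smul, Matrix.mulVec_single]
    show δ * (M i r * 1) = δ * M i r
    ring
  have hiff : (∃! i : Fin p, ξ i ≠ 0) ↔ (∃! i : Fin p, M i r ≠ 0) := by
    apply existsUnique_congr
    intro i
    rw [hxi i]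
    constructor
    · intro h hM0; exact h (by rw [hM0, mul_zero])
    · intro h hprod; exact h (by
        rcases mul_eq_zero.mp hprod with h' | h'
        · exact absurd h' hδ
        · exact h')
  rw [hiff]
  constructor
  · rintro ⟨s, hs, huniq⟩
    have hMz : ∀ j : Fin p, j ≠ s → M j r = 0 := by
      intro j hj
      by_contra h
      exact hj (huniq j h)
    -- s ≤ r
    have hsr : s ≤ r := by
      have h1 : A r r = ∑ j, L r j * M j r := by
        rw [← hLM, Matrix.mul_apply]
      rw [hAdiag r] at h1
      have h2 : ∑ j, L r j * M j r = L r s * M s r := by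
        refine Finset.sum_eq_single s (fun j _ hj => ?_) (by simp)
        rw [hMz j hj, mul_zero]
      rw [h2] at h1
      have hLrs : L r s ≠ 0 := fun h0 => by simp [h0] at h1
      by_contra h
      exact hLrs (hLtri r s (lt_of_not_ge h))
    -- condition (i)
    have condi : ∀ k : Fin p, r < k → B r k = 0 := by
      have hind : ∀ n : ℕ, ∀ j : Fin p, p - (j : ℕ) ≤ n → r < j → B r j = 0 := by
        intro n
        induction n with
        | zero => intro j hj _; exact absurd hj (by omega)
        | succ n ih =>
          intro j hj hrj
          have hMjr : M j r = 0 := hMz j (fun h => absurd (h ▸ hrj) (not_lt.mpr hsr))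
          have hk := key j
          rw [hMjr, mul_zero, hLtri r j hrj] at hk
          have hsum : ∑ m, B r m * L m j = 0 := by linarith
          have h2 : ∑ m, B r m * L m j = B r j * L j j := by
            refine Finset.sum_eq_single j (fun m _ hm => ?_) (by simp)
            rcases lt_or_gt_of_ne hm with h' | h'
            · rw [hLtri m j h', mul_zero]
            · rw [ih m (by omega) (lt_trans hrj h'), zero_mul]
          rw [h2] at hsum
          exact (mul_eq_zero.mp hsum).resolve_right (hLdiag j).ne'
      intro k hk
      exact hind p k (by omega) hk
    -- s = r
    have hsr' : s = r := by
      have hk := key r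
      have hsum : ∑ m, B r m * L m r = 0 := by
        refine Finset.sum_eq_zero (fun m _ => ?_)
        rcases lt_trichotomy m r with h' | h' | h'
        · rw [hLtri m r h', mul_zero]
        · rw [h', hBdiag r, zero_mul]
        · rw [condi m h', zero_mul]
      rw [hsum, sub_zero] at hk
      have hMrr : M r r ≠ 0 := by
        intro h0
        rw [h0, mul_zero] at hk
        exact (hLdiag r).ne' hk.symm
      exact (huniq r hMrr).symm
    rw [hsr'] at hMz
    -- condition (ii)
    refine ⟨condi, fun k hk => ?_⟩
    have h1 : A k r = ∑ j, L k j * M j r := by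
      rw [← hLM, Matrix.mul_apply]
    have h2 : ∑ j, L k j * M j r = L k r * M r r := by
      refine Finset.sum_eq_single r (fun j _ hj => ?_) (by simp)
      rw [hMz j hj, mul_zero]
    rw [h1, h2, hLtri k r hk, zero_mul]
  · rintro ⟨condi, condii⟩
    refine ⟨r, ?_, ?_⟩
    · -- M r r ≠ 0
      show M r r ≠ 0
      have h1 : M r r = ∑ j, L⁻¹ r j * A j r := by
        rw [hMdef, Matrix.mul_apply]
      have h2 : ∑ j, L⁻¹ r j * A j r = L⁻¹ r r * A r r := by
        refine Finset.sum_eq_single r (fun j _ hj => ?_) (by simp)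
        rcases lt_or_gt_of_ne hj with h' | h'
        · rw [condii j h', mul_zero]
        · rw [hLinvtri r j h', zero_mul]
      rw [h1, h2, hAdiag r, mul_one]
      intro h0
      have := hLinvdiag r
      rw [h0, mul_zero] at this
      exact zero_ne_one this
    · -- uniqueness
      intro i hi
      by_contra hir
      apply hi
      rcases lt_or_gt_of_ne hir with h' | h'
      · -- i < r
        rw [hMdef, Matrix.mul_apply]
        refine Finset.sum_eq_zero (fun j _ => ?_)
        rcases lt_or_ge i j with h'' | h''
        · rw [hLinvtri i j h'', zero_mul]
        · rw [condii j (lt_of_le_of_lt h'' h'), mul_zero]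
      · -- r < i
        have hk := key i
        have hsum : ∑ m, B r m * L m i = 0 := by
          refine Finset.sum_eq_zero (fun m _ => ?_)
          rcases lt_or_ge m i with h'' | h''
          · rw [hLtri m i h'', mul_zero]
          · rw [condi m (lt_of_lt_of_le h' h''), zero_mul]
        rw [hsum, sub_zero, hLtri r i h'] at hk
        exact (mul_eq_zero.mp hk).resolve_left (hDpos r).ne'
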